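/- arXiv:2305.14496 — 4 statements merged into one kernel-verified Lean document; each statement's English description precedes it below -/
import Mathlib

section
/- Suppose the rate-function family satisfies the growth conditions (G1) and (G2), I_θ(0) = 0 for all θ ∈ Θ, and J : Θ → ℝ is continuous. Fix r > 0, δ ≥ 0 and θ'_0 ∈ Θ, and assume the LDP lower bound at θ'_0. Let (Φ̄_T)_{T>0} be a family of Borel measurable functions E → ℝ that is eventually equi-upper semicontinuous, and suppose Δ := liminf_{T→∞}(J̄^δ_{T,r}(θ'_0) − Φ̄_T(θ'_0)) > 0. Then lim_{T→∞} (1/b_T) log P_{θ'_0}(J(θ'_0) > Φ̄_T(θ̂_T)) = 0. -/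
set_option autoImplicit false

open Filter Topology Metric Set MeasureTheory

noncomputable section

variable {E : Type*} [NormedAddCommGroup E] [NormedSpace ℝ E]

/-- The sublevel set `S_{θ,r} = {ϑ ∈ E : I_θ(ϑ) ≤ r}` of the rate function. -/
def sublevelSet (I : E → E → ENNReal) (θ : E) (r : ℝ) : Set E :=
  {ϑ : E | I θ ϑ ≤ ENNReal.ofReal r}

/-- The open `δ`-fattening `S^δ_{θ,r}` of the sublevel set, where `S^0_{θ,r} = S_{θ,r}`;
for `δ > 0` it is the set of points at distance `< δ` from `S_{θ,r}`, i.e. the union of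
open balls of radius `δ` around points of `S_{θ,r}`. -/
def fatSublevel (I : E → E → ENNReal) (θ : E) (r δ : ℝ) : Set E :=
  if δ = 0 then sublevelSet I θ r
  else ⋃ ϑ ∈ sublevelSet I θ r, Metric.ball ϑ δ

/-- Growth condition (G1): for sequences `θ_n ∈ Θ` with `sup_n ‖θ_n‖ < ∞` and
`‖ϑ_n‖ → ∞`, `I_{θ_n}(ϑ_n) → ∞`. -/
def GrowthG1 (Θ : Set E) (I : E → E → ENNReal) : Prop :=
  ∀ θs ϑs : ℕ → E, (∀ n, θs n ∈ Θ) → (∃ C : ℝ, ∀ n, ‖θs n‖ ≤ C) →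
    Tendsto (fun n => ‖ϑs n‖) atTop atTop →
    Tendsto (fun n => I (θs n) (ϑs n)) atTop (nhds ⊤)

/-- Growth condition (G2): for sequences `θ_n ∈ Θ` with `‖θ_n‖ → ∞` and
`‖ϑ_n‖/‖θ_n‖ → ∞`, `limsup_n I_{θ_n}(ϑ_n) = ∞`. -/
def GrowthG2 (Θ : Set E) (I : E → E → ENNReal) : Prop :=
  ∀ θs ϑs : ℕ → E, (∀ n, θs n ∈ Θ) →
    Tendsto (fun n => ‖θs n‖) atTop atTop →
    Tendsto (fun n => ‖ϑs n‖ / ‖θs n‖) atTop atTop →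
    Filter.limsup (fun n => I (θs n) (ϑs n)) atTop = ⊤

/-- The upper confidence bound `J̄^δ_{T,r}(θ') = sup {J(θ) : θ ∈ Θ, a_T (θ' - θ) ∈ S^δ_{θ,r}}`. -/
def upperCB (Θ : Set E) (I : E → E → ENNReal) (J : E → ℝ) (r δ : ℝ) (a : ℝ → ℝ)
    (T : ℝ) (θ' : E) : ℝ :=
  sSup (J '' {θ : E | θ ∈ Θ ∧ a T • (θ' - θ) ∈ fatSublevel I θ r δ})

/-- The lower confidence bound `J̲^δ_{T,r}(θ') = inf {J(θ) : θ ∈ Θ, a_T (θ' - θ) ∈ S^δ_{θ,r}}`. -/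
def lowerCB (Θ : Set E) (I : E → E → ENNReal) (J : E → ℝ) (r δ : ℝ) (a : ℝ → ℝ)
    (T : ℝ) (θ' : E) : ℝ :=
  sInf (J '' {θ : E | θ ∈ Θ ∧ a T • (θ' - θ) ∈ fatSublevel I θ r δ})

variable {Ω : Type*} [MeasurableSpace Ω]

/-- LDP lower bound at `θ0` for the family `a_T (θ̂_T − θ0)` with speed `b_T`:
for every open `G ⊆ E`,
`liminf_{T→∞} (1/b_T) log P(a_T(θ̂_T − θ0) ∈ G) ≥ − inf_{ϑ ∈ G} I(ϑ)`. -/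
def LDPLowerAt (P : Measure Ω) (θhat : ℝ → Ω → E) (a b : ℝ → ℝ)
    (Irate : E → ENNReal) (θ0 : E) : Prop :=
  ∀ G : Set E, IsOpen G →
    -(((⨅ ϑ ∈ G, Irate ϑ) : ENNReal) : EReal) ≤
      Filter.liminf
        (fun T => (((b T)⁻¹ : ℝ) : EReal) *
          ENNReal.log (P {ω | a T • (θhat T ω - θ0) ∈ G})) atTop

/-- LDP upper bound at `θ0` for the family `a_T (θ̂_T − θ0)` with speed `b_T`:
for every closed `F ⊆ E`,
`limsup_{T→∞} (1/b_T) log P(a_T(θ̂_T − θ0) ∈ F) ≤ − inf_{ϑ ∈ F} I(ϑ)`. -/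
def LDPUpperAt (P : Measure Ω) (θhat : ℝ → Ω → E) (a b : ℝ → ℝ)
    (Irate : E → ENNReal) (θ0 : E) : Prop :=
  ∀ F : Set E, IsClosed F →
    Filter.limsup
      (fun T => (((b T)⁻¹ : ℝ) : EReal) *
        ENNReal.log (P {ω | a T • (θhat T ω - θ0) ∈ F})) atTop ≤
      -(((⨅ ϑ ∈ F, Irate ϑ) : ENNReal) : EReal)

/-- Eventual equi-upper semicontinuity at a point. -/
def EvEquiUSCAt {W : Type*} [PseudoMetricSpace W] (φ : ℝ → W → ℝ) (w0 : W) : Prop :=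
  ∀ ε > (0 : ℝ), ∃ δ > (0 : ℝ), ∃ T0 > (0 : ℝ),
    ∀ T ≥ T0, ∀ w ∈ Metric.closedBall w0 δ, φ T w - φ T w0 < ε


/-- Membership in the fattened sublevel set gives a nearby point of the sublevel set. -/
lemma mem_fatSublevel_elim {I : E → E → ENNReal} {θ : E} {r δ : ℝ} (hδ : 0 ≤ δ) {x : E}
    (hx : x ∈ fatSublevel I θ r δ) :
    ∃ ϑ, I θ ϑ ≤ ENNReal.ofReal r ∧ ‖x - ϑ‖ ≤ δ := by
  unfold fatSublevel at hx
  split_ifs at hx with h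
  · exact ⟨x, hx, by simp [h]⟩
  · simp only [Set.mem_iUnion] at hx
    obtain ⟨ϑ, hϑ, hb⟩ := hx
    exact ⟨ϑ, hϑ, by rw [← dist_eq_norm]; exact (Metric.mem_ball.mp hb).le⟩

lemma zero_mem_fatSublevel {I : E → E → ENNReal} {θ : E} {r δ : ℝ} (hδ : 0 ≤ δ)
    (hI0 : I θ 0 = 0) : (0 : E) ∈ fatSublevel I θ r δ := by
  have h0 : (0 : E) ∈ sublevelSet I θ r := by
    simp [sublevelSet, hI0]
  unfold fatSublevel
  split_ifs with h
  · exact h0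
  · have hδ' : 0 < δ := lt_of_le_of_ne hδ (Ne.symm h)
    exact Set.mem_biUnion h0 (Metric.mem_ball_self hδ')

/-- The key shrinking lemma: eventually in `T`, every `θ ∈ Θ` with
`a T • (θ'0 - θ) ∈ S^δ_{θ,r}` is within `ε` of `θ'0`. -/
lemma shrink_lemma (Θ : Set E) (I : E → E → ENNReal) (a : ℝ → ℝ)
    (hatop : Tendsto a atTop atTop) (ha0 : ∀ T, 0 ≤ a T)
    (hG1 : GrowthG1 Θ I) (hG2 : GrowthG2 Θ I) (r δ : ℝ) (hδ : 0 ≤ δ) (θ'0 : E)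
    {ε : ℝ} (hε : 0 < ε) :
    ∀ᶠ T in atTop, ∀ θ ∈ Θ, a T • (θ'0 - θ) ∈ fatSublevel I θ r δ → ‖θ - θ'0‖ < ε := by
  by_contra hcon
  rw [Filter.not_eventually] at hcon
  have hfreq : ∃ᶠ T in atTop, ∃ θ, θ ∈ Θ ∧ a T • (θ'0 - θ) ∈ fatSublevel I θ r δ ∧
      ε ≤ ‖θ - θ'0‖ := by
    apply hcon.mono
    intro T hT
    push_neg at hT
    obtain ⟨θ, h1, h2, h3⟩ := hT
    exact ⟨θ, h1, h2, h3⟩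
  -- extract a sequence T n → ∞
  have hsel : ∀ n : ℕ, ∃ T : ℝ, (n : ℝ) ≤ T ∧ ∃ θ, θ ∈ Θ ∧
      a T • (θ'0 - θ) ∈ fatSublevel I θ r δ ∧ ε ≤ ‖θ - θ'0‖ := by
    intro n
    obtain ⟨T, hT1, hT2⟩ := (Filter.frequently_atTop.mp hfreq) (n : ℝ)
    exact ⟨T, hT1, hT2⟩
  choose T hTn θs hθsΘ hθsmem hθsfar using hsel
  have hT : Tendsto T atTop atTop :=
    tendsto_atTop_mono hTn tendsto_natCast_atTop_atTop
  have hA : Tendsto (fun n => a (T n)) atTop atTop := hatop.comp hT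
  choose ϑs hϑsI hϑsclose using fun n => mem_fatSublevel_elim hδ (hθsmem n)
  -- norm lower bound for ϑs
  have hϑlb : ∀ n, a (T n) * ‖θs n - θ'0‖ - δ ≤ ‖ϑs n‖ := by
    intro n
    have h1 : ‖a (T n) • (θ'0 - θs n)‖ - ‖ϑs n‖ ≤ δ :=
      le_trans (by
        have := norm_sub_norm_le (a (T n) • (θ'0 - θs n)) (ϑs n)
        linarith) (hϑsclose n)
    have h2 : ‖a (T n) • (θ'0 - θs n)‖ = a (T n) * ‖θs n - θ'0‖ := by
      rw [norm_smul, Real.norm_eq_abs, abs_of_nonneg (ha0 _), norm_sub_rev]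
    linarith
  by_cases hb : Tendsto (fun n => ‖θs n‖) atTop atTop
  · -- G2 case
    have hdiv : Tendsto (fun n => ‖ϑs n‖ / ‖θs n‖) atTop atTop := by
      have hlarge : ∀ᶠ n in atTop, max 1 (2 * ‖θ'0‖) ≤ ‖θs n‖ :=
        hb.eventually_ge_atTop _
      have hAlarge : ∀ᶠ n in atTop, 0 ≤ a (T n) := Eventually.of_forall fun n => ha0 _
      have hbound : ∀ᶠ n in atTop, a (T n) / 2 - δ ≤ ‖ϑs n‖ / ‖θs n‖ := by
        filter_upwards [hlarge] with n hn
        have h1 : (1 : ℝ) ≤ ‖θs n‖ := le_trans (le_max_left _ _) hn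
        have h1' : (0 : ℝ) < ‖θs n‖ := lt_of_lt_of_le one_pos h1
        have h2 : 2 * ‖θ'0‖ ≤ ‖θs n‖ := le_trans (le_max_right _ _) hn
        have h3 : ‖θs n‖ - ‖θ'0‖ ≤ ‖θs n - θ'0‖ := by
          have := norm_sub_norm_le (θs n) θ'0
          linarith
        have h4 : a (T n) * (‖θs n‖ / 2) - δ ≤ ‖ϑs n‖ := by
          have h5 : a (T n) * (‖θs n‖ / 2) ≤ a (T n) * ‖θs n - θ'0‖ := by
            apply mul_le_mul_of_nonneg_left _ (ha0 _)
            linarith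
          linarith [hϑlb n]
        rw [le_div_iff₀ h1']
        nlinarith [mul_nonneg hδ (by linarith : (0:ℝ) ≤ ‖θs n‖ - 1)]
      exact tendsto_atTop_mono' atTop hbound
        (tendsto_atTop_add_const_right _ (-δ) (hA.atTop_div_const two_pos)
          |>.congr (fun n => by ring_nf))
    have := hG2 θs ϑs hθsΘ hb hdiv
    have hle : Filter.limsup (fun n => I (θs n) (ϑs n)) atTop ≤ ENNReal.ofReal r :=
      Filter.limsup_le_of_le (by isBoundedDefault) (Eventually.of_forall hϑsI)
    rw [this] at hle
    exact absurd (lt_of_le_of_lt hle ENNReal.ofReal_lt_top) (lt_irrefl _)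
  · -- G1 case
    rw [Filter.tendsto_atTop] at hb
    push_neg at hb
    obtain ⟨C, hC⟩ := hb
    obtain ⟨φ, hφmono, hφ⟩ := Filter.extraction_of_frequently_atTop
      hC
    have hAφ : Tendsto (fun n => a (T (φ n))) atTop atTop := hA.comp hφmono.tendsto_atTop
    have hϑφ : Tendsto (fun n => ‖ϑs (φ n)‖) atTop atTop := by
      apply tendsto_atTop_mono' atTop
        (Eventually.of_forall (fun n => ?_))
        (tendsto_atTop_add_const_right _ (-δ) (hAφ.atTop_mul_const hε))
      have h5 : a (T (φ n)) * ε ≤ a (T (φ n)) * ‖θs (φ n) - θ'0‖ :=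
        mul_le_mul_of_nonneg_left (hθsfar _) (ha0 _)
      have := hϑlb (φ n)
      simp only [sub_eq_add_neg] at *
      linarith
    have hItop := hG1 (fun n => θs (φ n)) (fun n => ϑs (φ n)) (fun n => hθsΘ _)
      ⟨C, fun n => (hφ n).le⟩ hϑφ
    have hev : ∀ᶠ n in atTop, ENNReal.ofReal r < I (θs (φ n)) (ϑs (φ n)) :=
      hItop (Ioi_mem_nhds ENNReal.ofReal_lt_top)
    obtain ⟨n, hn⟩ := hev.exists
    exact absurd (lt_of_lt_of_le hn (hϑsI _)) (lt_irrefl _)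

/-- if `(Φ̄_T)` is eventually equi-u.s.c. and
`Δ = liminf (J̄^δ_{T,r}(θ'_0) − Φ̄_T(θ'_0)) > 0`, then under the LDP lower bound at `θ'_0`,
`lim_{T→∞} (1/b_T) log P_{θ'_0}(J(θ'_0) > Φ̄_T(θ̂_T)) = 0`. -/
theorem stmt5 (Θ : Set E) (hΘ : Θ.Nonempty) (I : E → E → ENNReal) (J : E → ℝ)
    [MeasurableSpace E] [BorelSpace E]
    (P : E → Measure Ω) (hP : ∀ θ, IsProbabilityMeasure (P θ))
    (θhat : ℝ → Ω → E) (hθhatmeas : ∀ T, Measurable (θhat T))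
    (b a : ℝ → ℝ) (hbpos : ∀ T, 0 < b T) (hbtop : Tendsto b atTop atTop)
    (hadef : ∀ T, a T = Real.sqrt (T / b T)) (hatop : Tendsto a atTop atTop)
    (hG1 : GrowthG1 Θ I) (hG2 : GrowthG2 Θ I)
    (hI0 : ∀ θ ∈ Θ, I θ 0 = 0)
    (hJ : ContinuousOn J Θ)
    (r δ : ℝ) (hr : 0 < r) (hδ : 0 ≤ δ)
    (θ'0 : E) (hθ'0 : θ'0 ∈ Θ)
    (hLDPlow : LDPLowerAt (P θ'0) θhat a b (I θ'0) θ'0)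
    (Φ : ℝ → E → ℝ) (hΦmeas : ∀ T, Measurable (Φ T))
    (hΦusc : ∀ w0 : E, EvEquiUSCAt Φ w0)
    (hΔ : (0 : EReal) <
      Filter.liminf (fun T => ((upperCB Θ I J r δ a T θ'0 - Φ T θ'0 : ℝ) : EReal)) atTop) :
    Tendsto
      (fun T => (((b T)⁻¹ : ℝ) : EReal) *
        ENNReal.log (P θ'0 {ω | J θ'0 > Φ T (θhat T ω)}))
      atTop (nhds 0) := by
  haveI := hP θ'0
  -- positivity of a
  have ha0 : ∀ T, 0 ≤ a T := fun T => (hadef T) ▸ Real.sqrt_nonneg _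
  -- extract a real gap c with 0 < c below the liminf
  obtain ⟨c, hc0, hcΔ⟩ := EReal.exists_between_coe_real hΔ
  have hc0' : (0 : ℝ) < c := by exact_mod_cast hc0
  have hgap : ∀ᶠ T in atTop, c < upperCB Θ I J r δ a T θ'0 - Φ T θ'0 := by
    have := Filter.eventually_lt_of_lt_liminf hcΔ
    filter_upwards [this] with T hT
    exact_mod_cast hT
  -- continuity of J at θ'0 within Θ
  obtain ⟨ε, hε0, hεJ⟩ := (Metric.continuousWithinAt_iff.mp (hJ θ'0 hθ'0)) (c / 2)
    (by linarith)
  -- eventually upperCB ≤ J θ'0 + c/2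
  have hCB : ∀ᶠ T in atTop,
      upperCB Θ I J r δ a T θ'0 ≤ J θ'0 + c / 2 := by
    filter_upwards [shrink_lemma Θ I a hatop ha0 hG1 hG2 r δ hδ θ'0 hε0] with T hT
    apply csSup_le
    · refine ⟨J θ'0, θ'0, ⟨hθ'0, ?_⟩, rfl⟩
      rw [sub_self, smul_zero]
      exact zero_mem_fatSublevel hδ (hI0 θ'0 hθ'0)
    · rintro x ⟨θ, ⟨hθΘ, hθmem⟩, rfl⟩
      have hclose : ‖θ - θ'0‖ < ε := hT θ hθΘ hθmem
      have := hεJ hθΘ (by rwa [dist_eq_norm])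
      rw [Real.dist_eq] at this
      have := abs_lt.mp this
      linarith [this.2]
  -- eventually Φ T θ'0 < J θ'0 - c/2
  have hΦsmall : ∀ᶠ T in atTop, Φ T θ'0 < J θ'0 - c / 2 := by
    filter_upwards [hgap, hCB] with T h1 h2
    linarith
  -- equi-usc at θ'0 with ε = c/4
  obtain ⟨δ', hδ'0, T0, hT00, husc⟩ := hΦusc θ'0 (c / 4) (by linarith)
  -- the main eventual inequality between the two sequences
  set f := fun T => (((b T)⁻¹ : ℝ) : EReal) *
    ENNReal.log (P θ'0 {ω | J θ'0 > Φ T (θhat T ω)}) with hf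
  set g := fun T => (((b T)⁻¹ : ℝ) : EReal) *
    ENNReal.log (P θ'0 {ω | a T • (θhat T ω - θ'0) ∈ Metric.ball (0 : E) 1}) with hg
  have hbinv : ∀ T, (0 : EReal) ≤ (((b T)⁻¹ : ℝ) : EReal) := by
    intro T
    exact_mod_cast (inv_nonneg.mpr (hbpos T).le)
  have hgf : ∀ᶠ T in atTop, g T ≤ f T := by
    filter_upwards [hΦsmall, hatop.eventually_ge_atTop (max 1 δ'⁻¹),
      Filter.eventually_ge_atTop T0] with T h1 h2 h3
    have haT1 : (1 : ℝ) ≤ a T := le_trans (le_max_left _ _) h2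
    have haT0 : (0 : ℝ) < a T := lt_of_lt_of_le one_pos haT1
    have hsub : {ω | a T • (θhat T ω - θ'0) ∈ Metric.ball (0 : E) 1} ⊆
        {ω | J θ'0 > Φ T (θhat T ω)} := by
      intro ω hω
      simp only [Set.mem_setOf_eq, mem_ball_zero_iff] at hω ⊢
      have hnorm : ‖θhat T ω - θ'0‖ ≤ δ' := by
        rw [norm_smul, Real.norm_eq_abs, abs_of_pos haT0] at hω
        have h4 : ‖θhat T ω - θ'0‖ < (a T)⁻¹ := by
          rwa [← lt_div_iff₀' haT0, div_eq_inv_mul, mul_one] at hω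
        have h5 : (a T)⁻¹ ≤ δ' := by
          rw [inv_le_comm₀ haT0 hδ'0]
          exact le_trans (le_max_right _ _) h2
        linarith
      have hball : θhat T ω ∈ Metric.closedBall θ'0 δ' := by
        rwa [Metric.mem_closedBall, dist_eq_norm]
      have := husc T h3 (θhat T ω) hball
      linarith
    have hPle := measure_mono (μ := P θ'0) hsub
    exact mul_le_mul_of_nonneg_left (ENNReal.log_monotone hPle) (hbinv T)
  -- liminf g ≥ 0 from the LDP lower bound
  have hinf0 : (⨅ ϑ ∈ Metric.ball (0 : E) 1, I θ'0 ϑ) = 0 := by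
    apply le_antisymm _ zero_le
    refine le_trans (biInf_le _ (Metric.mem_ball_self one_pos)) ?_
    exact (hI0 θ'0 hθ'0).le
  have hliminfg : (0 : EReal) ≤ Filter.liminf g atTop := by
    have := hLDPlow (Metric.ball (0 : E) 1) Metric.isOpen_ball
    rw [hinf0] at this
    rw [hg]
    simpa using this
  -- liminf f ≥ 0
  have hliminff : (0 : EReal) ≤ Filter.liminf f atTop :=
    le_trans hliminfg (Filter.liminf_le_liminf hgf)
  -- limsup f ≤ 0
  have hlimsupf : Filter.limsup f atTop ≤ (0 : EReal) := by
    apply Filter.limsup_le_of_le (by isBoundedDefault)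
    apply Eventually.of_forall
    intro T
    have hP1 : P θ'0 {ω | J θ'0 > Φ T (θhat T ω)} ≤ 1 := prob_le_one
    have hlog : ENNReal.log (P θ'0 {ω | J θ'0 > Φ T (θhat T ω)}) ≤ 0 := by
      rw [← ENNReal.log_one]
      exact ENNReal.log_monotone hP1
    calc f T ≤ (((b T)⁻¹ : ℝ) : EReal) * 0 :=
          mul_le_mul_of_nonneg_left hlog (hbinv T)
      _ = 0 := mul_zero _
  exact tendsto_of_le_liminf_of_limsup_le hliminff hlimsupf
end
end

section
/- Pointwise minimality: Suppose the rate-function family satisfies the growth conditions (G1) and (G2), I_θ(0) = 0 for all θ ∈ Θ, J : Θ → ℝ is continuous, and the LDP lower bound holds at every θ ∈ Θ. Fix r > 0 and δ > 0. Let (H̄_T)_{T>0} be an eventually equi-upper semicontinuous family of Borel measurable functions E → ℝ and (H̲_T)_{T>0} an eventually equi-lower semicontinuous family of Borel measurable functions E → ℝ satisfying, for every θ ∈ Θ, limsup_{T→∞} (1/b_T) log P_θ(J(θ) ∉ [H̲_T(θ̂_T), H̄_T(θ̂_T)]) ≤ −r. Then for every θ ∈ Θ, limsup_{T→∞} (J̄^δ_{T,r}(θ)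 − H̄_T(θ)) ≤ 0 and liminf_{T→∞} (J̲^δ_{T,r}(θ) − H̲_T(θ)) ≥ 0. -/
set_option autoImplicit false

open Filter Topology Metric Set MeasureTheory

noncomputable section

variable {E : Type*} [NormedAddCommGroup E] [NormedSpace ℝ E]

variable {Ω : Type*} [MeasurableSpace Ω]

/-- Eventual equi-lower semicontinuity at a point: `(−φ_T)` is eventually equi-u.s.c. -/
def EvEquiLSCAt {W : Type*} [PseudoMetricSpace W] (φ : ℝ → W → ℝ) (w0 : W) : Prop :=
  EvEquiUSCAt (fun T w => -φ T w) w0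

/-- Eventual equicontinuity at a point. -/
def EvEquicontinuousAt {W : Type*} [PseudoMetricSpace W] (φ : ℝ → W → ℝ) (w0 : W) : Prop :=
  ∀ ε > (0 : ℝ), ∃ δ > (0 : ℝ), ∃ T0 > (0 : ℝ),
    ∀ T ≥ T0, ∀ w ∈ Metric.closedBall w0 δ, |φ T w - φ T w0| < ε

lemma mem_fatSublevel_pos {I : E → E → ENNReal} {θ' : E} {r δ : ℝ} (hδ : δ ≠ 0) {x : E} :
    x ∈ fatSublevel I θ' r δ ↔ ∃ ϑ, I θ' ϑ ≤ ENNReal.ofReal r ∧ dist x ϑ < δ := by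
  simp [fatSublevel, hδ, sublevelSet, Metric.mem_ball]

lemma aux_liminf_le_limsup {f g : ℝ → EReal}
    (h : ∃ᶠ T in atTop, g T ≤ f T) :
    Filter.liminf g atTop ≤ Filter.limsup f atTop := by
  by_contra hc
  push_neg at hc
  obtain ⟨c, hc1, hc2⟩ := EReal.exists_between_coe_real hc
  have h1 : ∀ᶠ T in atTop, f T < (c : EReal) := eventually_lt_of_limsup_lt hc1
  have h2 : ∀ᶠ T in atTop, (c : EReal) < g T := eventually_lt_of_lt_liminf hc2
  obtain ⟨T, hT, h1T, h2T⟩ := (h.and_eventually (h1.and h2)).exists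
  exact absurd (hT.trans_lt h1T) (not_lt.2 h2T.le)

lemma aux_shrink (Θ : Set E) (I : E → E → ENNReal)
    (hG1 : GrowthG1 Θ I) (hG2 : GrowthG2 Θ I)
    {a : ℝ → ℝ} (hatop : Tendsto a atTop atTop) (ha_nonneg : ∀ T, 0 ≤ a T)
    {r δ : ℝ} (hδ : 0 < δ) (θ : E)
    {ε : ℝ} (hε : 0 < ε) :
    ∀ᶠ T in atTop, ∀ θ' ∈ Θ, a T • (θ - θ') ∈ fatSublevel I θ' r δ → ‖θ - θ'‖ ≤ ε := by
  by_contra hcon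
  rw [Filter.not_eventually] at hcon
  push_neg at hcon
  rw [Filter.frequently_atTop] at hcon
  choose Ts hTs θs hθmem hmem hfar using fun n : ℕ => hcon (n : ℝ)
  have hTstop : Tendsto Ts atTop atTop :=
    tendsto_atTop_mono hTs tendsto_natCast_atTop_atTop
  have haTs : Tendsto (fun n => a (Ts n)) atTop atTop := hatop.comp hTstop
  choose ϑs hIle hdist using fun n => (mem_fatSublevel_pos hδ.ne').1 (hmem n)
  -- key norm bound
  have hnorm : ∀ n, a (Ts n) * ‖θ - θs n‖ - δ ≤ ‖ϑs n‖ := by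
    intro n
    have h1 : ‖a (Ts n) • (θ - θs n)‖ - ‖ϑs n‖ ≤ dist (a (Ts n) • (θ - θs n)) (ϑs n) := by
      rw [dist_eq_norm]
      exact norm_sub_norm_le _ _
    have h2 : ‖a (Ts n) • (θ - θs n)‖ = a (Ts n) * ‖θ - θs n‖ := by
      rw [norm_smul, Real.norm_eq_abs, abs_of_nonneg (ha_nonneg _)]
    have := (hdist n)
    linarith [h1, this]
  have hϑtop : Tendsto (fun n => ‖ϑs n‖) atTop atTop := by
    apply tendsto_atTop_mono (f := fun n => a (Ts n) * ε - δ)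
    · intro n
      have h3 : a (Ts n) * ε ≤ a (Ts n) * ‖θ - θs n‖ :=
        mul_le_mul_of_nonneg_left (hfar n).le (ha_nonneg _)
      linarith [hnorm n]
    · exact tendsto_atTop_add_const_right _ (-δ) (haTs.atTop_mul_const hε) |>.congr
        (fun n => by ring)
  by_cases hbdd : ∃ C, {n | ‖θs n‖ ≤ C}.Infinite
  · obtain ⟨C, hinf⟩ := hbdd
    set φ := Nat.nth (fun n => ‖θs n‖ ≤ C) with hφ
    have hφmono : StrictMono φ := Nat.nth_strictMono hinf
    have hφmem : ∀ n, ‖θs (φ n)‖ ≤ C := fun n => Nat.nth_mem_of_infinite hinf n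
    have hφtop : Tendsto φ atTop atTop := hφmono.tendsto_atTop
    have := hG1 (fun n => θs (φ n)) (fun n => ϑs (φ n)) (fun n => hθmem _)
      ⟨C, hφmem⟩ (hϑtop.comp hφtop)
    have hev : ∀ᶠ n in atTop, ENNReal.ofReal r < I (θs (φ n)) (ϑs (φ n)) :=
      this.eventually (eventually_gt_nhds ENNReal.ofReal_lt_top)
    obtain ⟨n, hn⟩ := hev.exists
    exact absurd (hIle (φ n)) (not_le.2 hn)
  · push_neg at hbdd
    have hθtop : Tendsto (fun n => ‖θs n‖) atTop atTop := by
      rw [Filter.tendsto_atTop]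
      intro C
      have hfin : {n | ‖θs n‖ ≤ C}.Finite := hbdd C
      have : ∀ᶠ n in (cofinite : Filter ℕ), ¬ ‖θs n‖ ≤ C := hfin.eventually_cofinite_notMem
      rw [Nat.cofinite_eq_atTop] at this
      exact this.mono fun n hn => (not_le.1 hn).le
    have hratio : Tendsto (fun n => ‖ϑs n‖ / ‖θs n‖) atTop atTop := by
      apply tendsto_atTop_mono' atTop (f₁ := fun n => a (Ts n) / 2 - δ)
      · have h1 : ∀ᶠ n in atTop, (1 : ℝ) ≤ ‖θs n‖ := hθtop.eventually_ge_atTop 1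
        have h2 : ∀ᶠ n in atTop, 2 * ‖θ‖ ≤ ‖θs n‖ := hθtop.eventually_ge_atTop _
        filter_upwards [h1, h2] with n h1n h2n
        have hs : (0:ℝ) < ‖θs n‖ := lt_of_lt_of_le one_pos h1n
        have hd : ‖θs n‖ / 2 ≤ ‖θ - θs n‖ := by
          have := norm_sub_norm_le (θs n) θ
          rw [norm_sub_rev (θs n) θ] at this
          linarith
        have h3 : a (Ts n) * (‖θs n‖ / 2) ≤ a (Ts n) * ‖θ - θs n‖ :=
          mul_le_mul_of_nonneg_left hd (ha_nonneg _)
        rw [le_div_iff₀ hs]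
        have h4 := hnorm n
        nlinarith [hδ]
      · exact tendsto_atTop_add_const_right _ (-δ)
          (haTs.atTop_div_const two_pos) |>.congr (fun n => by ring)
    have hsup := hG2 θs ϑs hθmem hθtop hratio
    have hle : Filter.limsup (fun n => I (θs n) (ϑs n)) atTop ≤ ENNReal.ofReal r :=
      Filter.limsup_le_of_le (by isBoundedDefault) (Filter.Eventually.of_forall hIle)
    rw [hsup] at hle
    exact absurd hle (by simp [lt_of_le_of_ne le_top ENNReal.ofReal_ne_top |>.ne])

lemma aux_partA (Θ : Set E) (I : E → E → ENNReal) (J : E → ℝ)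
    (hG1 : GrowthG1 Θ I) (hG2 : GrowthG2 Θ I)
    {a : ℝ → ℝ} (hatop : Tendsto a atTop atTop) (ha_nonneg : ∀ T, 0 ≤ a T)
    {r δ : ℝ} (hδ : 0 < δ)
    (hI0 : ∀ θ ∈ Θ, I θ 0 = 0) (hJ : ContinuousOn J Θ)
    {θ : E} (hθ : θ ∈ Θ) {ε : ℝ} (hε : 0 < ε) :
    ∀ᶠ T in atTop, upperCB Θ I J r δ a T θ ≤ J θ + ε ∧ J θ - ε ≤ lowerCB Θ I J r δ a T θ := by
  obtain ⟨η, hη, hcont⟩ := Metric.continuousWithinAt_iff.1 (hJ θ hθ) ε hε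
  filter_upwards [aux_shrink Θ I hG1 hG2 hatop ha_nonneg hδ θ (half_pos hη)] with T hT
  have hzero : (0 : E) ∈ fatSublevel I θ r δ :=
    (mem_fatSublevel_pos hδ.ne').2 ⟨0, by rw [hI0 θ hθ]; exact zero_le, by simpa using hδ⟩
  have hself : J θ ∈ J '' {θ'' : E | θ'' ∈ Θ ∧ a T • (θ - θ'') ∈ fatSublevel I θ'' r δ} :=
    ⟨θ, ⟨hθ, by simpa using hzero⟩, rfl⟩
  have hbound : ∀ x ∈ J '' {θ'' : E | θ'' ∈ Θ ∧ a T • (θ - θ'') ∈ fatSublevel I θ'' r δ},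
      |x - J θ| ≤ ε := by
    rintro x ⟨θ'', ⟨hmemΘ, hmemS⟩, rfl⟩
    have hnear := hT θ'' hmemΘ hmemS
    have hd : dist θ'' θ < η := by
      rw [dist_eq_norm, ← norm_sub_rev]; linarith
    exact le_of_lt (by simpa [Real.dist_eq] using hcont hmemΘ hd)
  refine ⟨csSup_le ⟨J θ, hself⟩ fun x hx => ?_, le_csInf ⟨J θ, hself⟩ fun x hx => ?_⟩
  · linarith [(abs_le.1 (hbound x hx)).2]
  · linarith [(abs_le.1 (hbound x hx)).1]

lemma aux_core {P : E → Measure Ω} {θhat : ℝ → Ω → E}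
    {b a : ℝ → ℝ} (hbpos : ∀ T, 0 < b T) (hatop : Tendsto a atTop atTop)
    {I : E → E → ENNReal} {θ : E} (hI0θ : I θ 0 = 0)
    (hLDP : LDPLowerAt (P θ) θhat a b (I θ) θ)
    {r : ℝ} (hr : 0 < r) (S : ℝ → Set Ω)
    (hacc : Filter.limsup (fun T => (((b T)⁻¹ : ℝ) : EReal) *
        ENNReal.log (P θ (S T))) atTop ≤ ((-r : ℝ) : EReal))
    {δ' : ℝ} (hδ' : 0 < δ')
    (hfreq : ∃ᶠ T in atTop, ∀ ω, θhat T ω ∈ Metric.closedBall θ δ' → ω ∈ S T) :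
    False := by
  set g := fun T => (((b T)⁻¹ : ℝ) : EReal) *
    ENNReal.log (P θ {ω | a T • (θhat T ω - θ) ∈ Metric.ball (0 : E) 1}) with hg
  have hevA : ∀ᶠ T in atTop, 1 / δ' ≤ a T ∧ 0 < a T := by
    filter_upwards [hatop.eventually_ge_atTop (max (1 / δ') 1)] with T h
    exact ⟨le_trans (le_max_left _ _) h, lt_of_lt_of_le one_pos (le_trans (le_max_right _ _) h)⟩
  have hfreq2 : ∃ᶠ T in atTop,
      g T ≤ (((b T)⁻¹ : ℝ) : EReal) * ENNReal.log (P θ (S T)) := by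
    refine (hfreq.and_eventually hevA).mono ?_
    rintro T ⟨hball, ha1, ha2⟩
    have hsub : {ω | a T • (θhat T ω - θ) ∈ Metric.ball (0 : E) 1} ⊆ S T := by
      intro ω hω
      apply hball
      rw [Set.mem_setOf_eq, mem_ball_zero_iff, norm_smul, Real.norm_eq_abs,
        abs_of_pos ha2] at hω
      rw [Metric.mem_closedBall, dist_eq_norm]
      have hδ'pos : (0:ℝ) < 1 / δ' := by positivity
      nlinarith [norm_nonneg (θhat T ω - θ),
        mul_le_mul_of_nonneg_right ha1 (norm_nonneg (θhat T ω - θ)),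
        one_div_mul_cancel (ne_of_gt hδ')]
    exact mul_le_mul_of_nonneg_left (ENNReal.log_monotone (measure_mono hsub))
      (by exact_mod_cast inv_nonneg.2 (hbpos T).le)
  have hliminf : (0 : EReal) ≤ Filter.liminf g atTop := by
    have h := hLDP (Metric.ball 0 1) Metric.isOpen_ball
    have hinf : (⨅ ϑ ∈ Metric.ball (0 : E) 1, I θ ϑ) = 0 :=
      le_antisymm (le_trans (biInf_le _ (Metric.mem_ball_self one_pos)) hI0θ.le) zero_le
    rw [hinf] at h
    rwa [show -(((0 : ENNReal) : EReal)) = (0 : EReal) from by simp] at h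
  have hle : (0 : EReal) ≤ ((-r : ℝ) : EReal) :=
    le_trans hliminf (le_trans (aux_liminf_le_limsup hfreq2) hacc)
  have : ((-r : ℝ) : EReal) < ((0 : ℝ) : EReal) := EReal.coe_lt_coe_iff.2 (by linarith)
  rw [EReal.coe_zero] at this
  exact absurd hle (not_le.2 this)

lemma aux_partB {P : E → Measure Ω} {θhat : ℝ → Ω → E}
    {b a : ℝ → ℝ} (hbpos : ∀ T, 0 < b T) (hatop : Tendsto a atTop atTop)
    {I : E → E → ENNReal} {θ : E} (hI0θ : I θ 0 = 0)
    (hLDP : LDPLowerAt (P θ) θhat a b (I θ) θ)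
    {r : ℝ} (hr : 0 < r) {J : E → ℝ}
    (Hbar Hlow : ℝ → E → ℝ)
    (hHbarusc : EvEquiUSCAt Hbar θ) (hHlowlsc : EvEquiLSCAt Hlow θ)
    (hacc : Filter.limsup
        (fun T => (((b T)⁻¹ : ℝ) : EReal) *
          ENNReal.log (P θ {ω | ¬(Hlow T (θhat T ω) ≤ J θ ∧ J θ ≤ Hbar T (θhat T ω))}))
        atTop ≤ ((-r : ℝ) : EReal))
    {ε : ℝ} (hε : 0 < ε) :
    (∀ᶠ T in atTop, J θ - ε ≤ Hbar T θ) ∧ (∀ᶠ T in atTop, Hlow T θ ≤ J θ + ε) := by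
  set S : ℝ → Set Ω :=
    fun T => {ω | ¬(Hlow T (θhat T ω) ≤ J θ ∧ J θ ≤ Hbar T (θhat T ω))} with hS
  constructor
  · by_contra hcon
    rw [Filter.not_eventually] at hcon
    obtain ⟨δ', hδ', T0, hT0, husc⟩ := hHbarusc (ε / 2) (by linarith)
    refine aux_core hbpos hatop hI0θ hLDP hr S hacc hδ' ?_
    have hev : ∀ᶠ T in atTop, T ≥ T0 := eventually_ge_atTop T0
    refine ((hcon.mono fun T h => not_le.1 h).and_eventually hev).mono ?_
    rintro T ⟨hbad, hT⟩ ω hω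
    have h1 := husc T hT (θhat T ω) hω
    rw [hS, Set.mem_setOf_eq]
    rintro ⟨-, h2⟩
    linarith
  · by_contra hcon
    rw [Filter.not_eventually] at hcon
    obtain ⟨δ', hδ', T0, hT0, hlsc⟩ := hHlowlsc (ε / 2) (by linarith)
    refine aux_core hbpos hatop hI0θ hLDP hr S hacc hδ' ?_
    have hev : ∀ᶠ T in atTop, T ≥ T0 := eventually_ge_atTop T0
    refine ((hcon.mono fun T h => not_le.1 h).and_eventually hev).mono ?_
    rintro T ⟨hbad, hT⟩ ω hω
    have h1 := hlsc T hT (θhat T ω) hω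
    simp only [] at h1
    rw [hS, Set.mem_setOf_eq]
    rintro ⟨h2, -⟩
    linarith

/-- pointwise minimality: any exponentially accurate interval family
`[H̲_T, H̄_T]` with ev-equi-l.s.c. lower and ev-equi-u.s.c. upper endpoints eventually
contains `[J̲^δ_{T,r}, J̄^δ_{T,r}]` pointwise on `Θ`. -/
theorem stmt10 (Θ : Set E) (hΘ : Θ.Nonempty) (I : E → E → ENNReal) (J : E → ℝ)
    [MeasurableSpace E] [BorelSpace E]
    (P : E → Measure Ω) (hP : ∀ θ, IsProbabilityMeasure (P θ))
    (θhat : ℝ → Ω → E) (hθhatmeas : ∀ T, Measurable (θhat T))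
    (b a : ℝ → ℝ) (hbpos : ∀ T, 0 < b T) (hbtop : Tendsto b atTop atTop)
    (hadef : ∀ T, a T = Real.sqrt (T / b T)) (hatop : Tendsto a atTop atTop)
    (hG1 : GrowthG1 Θ I) (hG2 : GrowthG2 Θ I)
    (hI0 : ∀ θ ∈ Θ, I θ 0 = 0)
    (hJ : ContinuousOn J Θ)
    (hLDPlow : ∀ θ ∈ Θ, LDPLowerAt (P θ) θhat a b (I θ) θ)
    (r δ : ℝ) (hr : 0 < r) (hδ : 0 < δ)
    (Hbar Hlow : ℝ → E → ℝ)
    (hHbarmeas : ∀ T, Measurable (Hbar T)) (hHlowmeas : ∀ T, Measurable (Hlow T))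
    (hHbarusc : ∀ w0 : E, EvEquiUSCAt Hbar w0)
    (hHlowlsc : ∀ w0 : E, EvEquiLSCAt Hlow w0)
    (haccurate : ∀ θ ∈ Θ,
      Filter.limsup
        (fun T => (((b T)⁻¹ : ℝ) : EReal) *
          ENNReal.log (P θ {ω | ¬(Hlow T (θhat T ω) ≤ J θ ∧ J θ ≤ Hbar T (θhat T ω))}))
        atTop ≤ ((-r : ℝ) : EReal)) :
    ∀ θ ∈ Θ,
      Filter.limsup (fun T => ((upperCB Θ I J r δ a T θ - Hbar T θ : ℝ) : EReal)) atTop ≤ 0 ∧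
      (0 : EReal) ≤
        Filter.liminf (fun T => ((lowerCB Θ I J r δ a T θ - Hlow T θ : ℝ) : EReal)) atTop := by
  intro θ hθ
  have ha_nonneg : ∀ T, 0 ≤ a T := fun T => by rw [hadef T]; exact Real.sqrt_nonneg _
  have hB : ∀ ε : ℝ, 0 < ε →
      (∀ᶠ T in atTop, J θ - ε ≤ Hbar T θ) ∧ (∀ᶠ T in atTop, Hlow T θ ≤ J θ + ε) :=
    fun ε hε => aux_partB hbpos hatop (hI0 θ hθ) (hLDPlow θ hθ) hr Hbar Hlow
      (hHbarusc θ) (hHlowlsc θ) (haccurate θ hθ) hε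
  have hA : ∀ ε : ℝ, 0 < ε → ∀ᶠ T in atTop,
      upperCB Θ I J r δ a T θ ≤ J θ + ε ∧ J θ - ε ≤ lowerCB Θ I J r δ a T θ :=
    fun ε hε => aux_partA Θ I J hG1 hG2 hatop ha_nonneg hδ hI0 hJ hθ hε
  constructor
  · have key : ∀ ε : ℝ, 0 < ε →
        Filter.limsup (fun T => ((upperCB Θ I J r δ a T θ - Hbar T θ : ℝ) : EReal)) atTop
          ≤ ((ε : ℝ) : EReal) := by
      intro ε hε
      apply Filter.limsup_le_of_le (by isBoundedDefault)
      filter_upwards [hA (ε / 2) (by linarith), (hB (ε / 2) (by linarith)).1] with T h1 h2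
      exact EReal.coe_le_coe_iff.2 (by linarith [h1.1])
    by_contra hcon
    push_neg at hcon
    obtain ⟨c, hc0, hc1⟩ := EReal.exists_between_coe_real hcon
    have hcpos : (0 : ℝ) < c := by
      have : ((0 : ℝ) : EReal) < (c : EReal) := by rwa [EReal.coe_zero]
      exact_mod_cast this
    exact absurd (key c hcpos) (not_le.2 hc1)
  · have key : ∀ ε : ℝ, 0 < ε →
        ((-ε : ℝ) : EReal) ≤
          Filter.liminf (fun T => ((lowerCB Θ I J r δ a T θ - Hlow T θ : ℝ) : EReal)) atTop := by
      intro ε hε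
      apply Filter.le_liminf_of_le (by isBoundedDefault)
      filter_upwards [hA (ε / 2) (by linarith), (hB (ε / 2) (by linarith)).2] with T h1 h2
      exact EReal.coe_le_coe_iff.2 (by linarith [h1.2])
    by_contra hcon
    push_neg at hcon
    obtain ⟨c, hc0, hc1⟩ := EReal.exists_between_coe_real hcon
    have hcneg : c < 0 := by
      have : (c : EReal) < ((0 : ℝ) : EReal) := by rwa [EReal.coe_zero]
      exact_mod_cast this
    have := key (-c) (by linarith)
    rw [neg_neg] at this
    exact absurd this (not_le.2 hc0)
end
end

section
/- Eventually uniformly most accurate: Suppose the rate-function family satisfies the growth conditions (G1) and (G2), I_θ(0) = 0 for all θ ∈ Θ, J : Θ → ℝ is uniformly continuous on bounded subsets of Θ, the LDP lower bound holds at every θ ∈ Θ, and either Θ is open in E or θ̂_T takes values in Θ for all T. Fix r > 0 and δ > 0. Let (H̲_T)_{T>0} and (H̄_T)_{T>0} be eventually equicontinuous families of Borel measurable functions E → ℝ satisfying, for every θ ∈ Θ, limsup_{T→∞} (1/b_T) log P_θ(J(θ) ∉ [H̲_T(θ̂_T), H̄_T(θ̂_T)]) ≤ −r. Let θ0, θ̃0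 ∈ Θ with J(θ̃0) ≠ J(θ0), suppose θ̂_T → θ0 in P_{θ0}-probability, and suppose the family (θ̂_T) is tight under P_{θ0} (for every ε > 0 there exist a compact K ⊆ E and T0 with P_{θ0}(θ̂_T ∉ K) ≤ ε for all T ≥ T0). Then limsup_{T→∞} [P_{θ0}(J(θ̃0) ≤ J̄^δ_{T,r}(θ̂_T)) − P_{θ0}(J(θ̃0) ≤ H̄_T(θ̂_T))] ≤ 0 and limsup_{T→∞} [P_{θ0}(J(θ̃0) ≥ J̲^δ_{T,r}(θ̂_T)) − P_{θ0}(J(θ̃0) ≥ H̲_T(θ̂_T))] ≤ 0 (assuming each J̄^δ_{T,r} and J̲^δ_{T,r} is Borel measurable). -/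
set_option autoImplicit false

open Filter Topology Metric Set MeasureTheory

noncomputable section

variable {E : Type*} [NormedAddCommGroup E] [NormedSpace ℝ E]

variable {Ω : Type*} [MeasurableSpace Ω]

section AuxLemmas

set_option linter.unusedSectionVars false

lemma aux_limsup_le_zero {u v : ℝ → ℝ} (h : ∀ᶠ T in atTop, u T ≤ v T)
    (hv : Tendsto v atTop (nhds 0)) :
    Filter.limsup (fun T => ((u T : ℝ) : EReal)) atTop ≤ 0 := by
  have h2 : Tendsto (fun T => ((v T : ℝ) : EReal)) atTop (nhds ((0:ℝ) : EReal)) :=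
    (continuous_coe_real_ereal.tendsto 0).comp hv
  have h1 : Filter.limsup (fun T => ((u T : ℝ) : EReal)) atTop ≤
      Filter.limsup (fun T => ((v T : ℝ) : EReal)) atTop :=
    Filter.limsup_le_limsup (h.mono fun T hT => EReal.coe_le_coe_iff.2 hT)
  rw [h2.limsup_eq] at h1
  simpa using h1

lemma aux_cover {μ : ℝ → ENNReal} {b : ℝ → ℝ} {r : ℝ}
    (hμ1 : ∀ T, μ T ≤ 1) (hb : ∀ T, 0 < b T) (hbtop : Tendsto b atTop atTop) (hr : 0 < r)
    (h : Filter.limsup (fun T => (((b T)⁻¹ : ℝ) : EReal) * ENNReal.log (μ T)) atTop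
      ≤ ((-r : ℝ) : EReal)) :
    Tendsto (fun T => (μ T).toReal) atTop (nhds 0) := by
  have hlt : ∀ᶠ T in atTop,
      (((b T)⁻¹ : ℝ) : EReal) * ENNReal.log (μ T) < ((-r/2 : ℝ) : EReal) := by
    refine Filter.eventually_lt_of_limsup_lt (lt_of_le_of_lt h ?_)
    exact_mod_cast (by linarith : -r < -r/2)
  refine squeeze_zero' (g := fun T => Real.exp (-r/2 * b T))
    (Filter.Eventually.of_forall fun T => ENNReal.toReal_nonneg)
    (hlt.mono fun T hT => ?_) ?_
  · rcases eq_or_ne (μ T) 0 with h0 | h0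
    · rw [h0]; simp only [ENNReal.toReal_zero]; positivity
    have hfin : μ T ≠ ⊤ := fun htop => by
      have := hμ1 T; rw [htop] at this; exact (not_le.2 (by norm_num : (1:ENNReal) < ⊤)) this
    have hlog : ENNReal.log (μ T) = ((Real.log (μ T).toReal : ℝ) : EReal) :=
      ENNReal.log_pos_real h0 hfin
    rw [hlog, ← EReal.coe_mul] at hT
    have hT' : (b T)⁻¹ * Real.log (μ T).toReal < -r/2 := EReal.coe_lt_coe_iff.1 hT
    have hbT := hb T
    have hlog' : Real.log (μ T).toReal ≤ -r/2 * b T := by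
      rw [inv_mul_lt_iff₀ hbT] at hT'
      nlinarith
    have hpos : 0 < (μ T).toReal := ENNReal.toReal_pos h0 hfin
    calc (μ T).toReal = Real.exp (Real.log (μ T).toReal) := (Real.exp_log hpos).symm
      _ ≤ Real.exp (-r/2 * b T) := Real.exp_le_exp.2 hlog'
  · have : Tendsto (fun T => -r/2 * b T) atTop atBot :=
      Tendsto.neg_mul_atTop (by linarith : (-r/2 : ℝ) < 0) tendsto_const_nhds hbtop
    exact Real.tendsto_exp_atBot.comp this

lemma aux_G1 {Θ : Set E} {I : E → E → ENNReal} (hG1 : GrowthG1 Θ I) (r C : ℝ) :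
    ∃ M : ℝ, 0 ≤ M ∧ ∀ θ ∈ Θ, ‖θ‖ ≤ C → ∀ ϑ, I θ ϑ ≤ ENNReal.ofReal r → ‖ϑ‖ ≤ M := by
  by_contra hcon
  push_neg at hcon
  have hcon' : ∀ n : ℕ, ∃ θ ∈ Θ, ‖θ‖ ≤ C ∧ ∃ ϑ, I θ ϑ ≤ ENNReal.ofReal r ∧ (n:ℝ) < ‖ϑ‖ := by
    intro n
    obtain ⟨θ, hθ, hθC, ϑ, hϑ, hn⟩ := hcon (n:ℝ) (Nat.cast_nonneg n)
    exact ⟨θ, hθ, hθC, ϑ, hϑ, hn⟩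
  choose θs hθs hθC ϑs hϑI hϑn using hcon'
  have htop := hG1 θs ϑs hθs ⟨C, hθC⟩
    (tendsto_atTop_mono (fun n => (hϑn n).le) tendsto_natCast_atTop_atTop)
  obtain ⟨n, hn⟩ := (htop.eventually (eventually_gt_nhds
    (show ENNReal.ofReal r < ⊤ from ENNReal.ofReal_lt_top))).exists
  exact absurd (hϑI n) (not_le.2 hn)

lemma aux_G2 {Θ : Set E} {I : E → E → ENNReal} (hG2 : GrowthG2 Θ I) (r : ℝ) :
    ∃ c : ℝ, 1 ≤ c ∧ ∀ θ ∈ Θ, ∀ ϑ, c ≤ ‖θ‖ → I θ ϑ ≤ ENNReal.ofReal r → ‖ϑ‖ ≤ c * ‖θ‖ := by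
  by_contra hcon
  push_neg at hcon
  have hcon' : ∀ n : ℕ, ∃ θ ∈ Θ, ∃ ϑ, ((n:ℝ)+1) ≤ ‖θ‖ ∧ I θ ϑ ≤ ENNReal.ofReal r ∧
      ((n:ℝ)+1) * ‖θ‖ < ‖ϑ‖ := by
    intro n
    obtain ⟨θ, hθ, ϑ, hc, hI, hn⟩ := hcon ((n:ℝ)+1) (by linarith [Nat.cast_nonneg (α := ℝ) n])
    exact ⟨θ, hθ, ϑ, hc, hI, hn⟩
  choose θs hθs ϑs hc hϑI hϑn using hcon'
  have hθpos : ∀ n : ℕ, (0:ℝ) < ‖θs n‖ := fun n => lt_of_lt_of_le (by positivity) (hc n)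
  have h1 : Tendsto (fun n => ‖θs n‖) atTop atTop :=
    tendsto_atTop_mono (fun n => le_trans (by simp) (hc n)) tendsto_natCast_atTop_atTop
  have h2 : Tendsto (fun n => ‖ϑs n‖ / ‖θs n‖) atTop atTop := by
    refine tendsto_atTop_mono (fun n => ?_) tendsto_natCast_atTop_atTop
    rw [le_div_iff₀ (hθpos n)]
    calc (n:ℝ) * ‖θs n‖ ≤ ((n:ℝ)+1) * ‖θs n‖ := by nlinarith [(hθpos n).le]
      _ ≤ ‖ϑs n‖ := (hϑn n).le
  have htop := hG2 θs ϑs hθs h1 h2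
  have hle : Filter.limsup (fun n => I (θs n) (ϑs n)) atTop ≤ ENNReal.ofReal r :=
    Filter.limsup_le_of_le (by isBoundedDefault) (Filter.Eventually.of_forall hϑI)
  rw [htop] at hle
  exact absurd hle (not_le.2 ENNReal.ofReal_lt_top)

lemma mem_fatSublevel {I : E → E → ENNReal} {θ y : E} {r δ : ℝ} (hδ : δ ≠ 0) :
    y ∈ fatSublevel I θ r δ ↔ ∃ ϑ, I θ ϑ ≤ ENNReal.ofReal r ∧ ‖y - ϑ‖ < δ := by
  simp [fatSublevel, hδ, sublevelSet, Metric.mem_ball, dist_eq_norm]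

lemma aux_det {Θ : Set E} {I : E → E → ENNReal} {r δ : ℝ} (hδ : 0 < δ)
    (hG1 : GrowthG1 Θ I) (hG2 : GrowthG2 Θ I) {a : ℝ → ℝ} (hatop : Tendsto a atTop atTop)
    (θ0 : E) (ζ : ℝ) (hζ : 0 < ζ) :
    ∃ T1 : ℝ, ∀ T ≥ T1, ∀ x : E, ‖x - θ0‖ ≤ 1 → ∀ θ ∈ Θ,
      a T • (x - θ) ∈ fatSublevel I θ r δ → ‖x - θ‖ ≤ ζ := by
  obtain ⟨c, hc1, hc⟩ := aux_G2 hG2 r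
  set κ : ℝ := ‖θ0‖ + 1 with hκdef
  have hκ1 : 1 ≤ κ := by simp only [hκdef]; linarith [norm_nonneg θ0]
  set C : ℝ := max c (2*κ + 2*δ) with hCdef
  obtain ⟨M, hM0, hM⟩ := aux_G1 hG1 r C
  obtain ⟨T1, hT1⟩ :=
    (hatop.eventually_ge_atTop (max (max (2*c) 1) ((M + δ)/ζ))).exists_forall_of_atTop
  refine ⟨T1, fun T hT x hx θ hθ hfeas => ?_⟩
  have haT := hT1 T hT
  have haT2c : 2*c ≤ a T := le_trans (le_trans (le_max_left _ _) (le_max_left _ _)) haT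
  have haT1 : 1 ≤ a T := le_trans (le_trans (le_max_right _ _) (le_max_left _ _)) haT
  have haTM : (M + δ)/ζ ≤ a T := le_trans (le_max_right _ _) haT
  have haT0 : 0 < a T := lt_of_lt_of_le one_pos haT1
  rw [mem_fatSublevel hδ.ne'] at hfeas
  obtain ⟨ϑ, hϑI, hϑd⟩ := hfeas
  have hxκ : ‖x‖ ≤ κ := by
    have h0 : ‖x‖ ≤ ‖x - θ0‖ + ‖θ0‖ := by simpa using norm_add_le (x - θ0) θ0
    simp only [hκdef]; linarith
  have hsmul : ‖a T • (x - θ)‖ = a T * ‖x - θ‖ := by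
    rw [norm_smul, Real.norm_eq_abs, abs_of_pos haT0]
  have hnorm : a T * ‖x - θ‖ ≤ ‖ϑ‖ + δ := by
    have h2 : ‖a T • (x - θ)‖ - ‖ϑ‖ ≤ ‖a T • (x - θ) - ϑ‖ := norm_sub_norm_le _ _
    rw [hsmul] at h2; linarith
  have hθC : ‖θ‖ ≤ C := by
    by_cases hcθ : c ≤ ‖θ‖
    · have hϑb := hc θ hθ ϑ hcθ hϑI
      have h3 : ‖θ‖ - κ ≤ ‖x - θ‖ := by
        have h4 : ‖θ‖ - ‖x‖ ≤ ‖θ - x‖ := norm_sub_norm_le _ _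
        rw [norm_sub_rev] at h4; linarith
      have h4 : a T * (‖θ‖ - κ) ≤ c * ‖θ‖ + δ := by
        have := mul_le_mul_of_nonneg_left h3 haT0.le
        linarith
      have h5 : (a T / 2) * ‖θ‖ ≤ a T * κ + δ := by nlinarith [norm_nonneg θ]
      have h6 : (a T / 2) * ‖θ‖ ≤ (a T / 2) * (2*κ + 2*δ) := by nlinarith
      have h7 : ‖θ‖ ≤ 2*κ + 2*δ := le_of_mul_le_mul_left h6 (by linarith)
      exact le_trans h7 (le_max_right _ _)
    · exact le_trans (not_le.1 hcθ).le (le_max_left _ _)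
  have hϑM : ‖ϑ‖ ≤ M := hM θ hθ hθC ϑ hϑI
  have h8 : M + δ ≤ a T * ζ := by
    rw [div_le_iff₀ hζ] at haTM; linarith
  have h9 : a T * ‖x - θ‖ ≤ a T * ζ := by linarith
  exact le_of_mul_le_mul_left h9 haT0

end AuxLemmas

/-- eventually uniformly most accurate: against any exponentially accurate
eventually equicontinuous interval family `(H̲_T, H̄_T)`, if `J(θ̃0) ≠ J(θ0)`, `θ̂_T → θ0`
in `P_{θ0}`-probability and `(θ̂_T)` is tight under `P_{θ0}`, then
`limsup [P_{θ0}(J(θ̃0) ≤ J̄^δ_{T,r}(θ̂_T)) − P_{θ0}(J(θ̃0) ≤ H̄_T(θ̂_T))] ≤ 0` and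
`limsup [P_{θ0}(J(θ̃0) ≥ J̲^δ_{T,r}(θ̂_T)) − P_{θ0}(J(θ̃0) ≥ H̲_T(θ̂_T))] ≤ 0`. -/
theorem stmt15 (Θ : Set E) (hΘ : Θ.Nonempty) (I : E → E → ENNReal) (J : E → ℝ)
    [MeasurableSpace E] [BorelSpace E]
    (P : E → Measure Ω) (hP : ∀ θ, IsProbabilityMeasure (P θ))
    (θhat : ℝ → Ω → E) (hθhatmeas : ∀ T, Measurable (θhat T))
    (b a : ℝ → ℝ) (hbpos : ∀ T, 0 < b T) (hbtop : Tendsto b atTop atTop)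
    (hadef : ∀ T, a T = Real.sqrt (T / b T)) (hatop : Tendsto a atTop atTop)
    (hG1 : GrowthG1 Θ I) (hG2 : GrowthG2 Θ I)
    (hI0 : ∀ θ ∈ Θ, I θ 0 = 0)
    (hJ : ∀ a0 > (0 : ℝ), ∀ θ0 ∈ Θ, UniformContinuousOn J (Metric.closedBall θ0 a0 ∩ Θ))
    (hLDPlow : ∀ θ ∈ Θ, LDPLowerAt (P θ) θhat a b (I θ) θ)
    (hdom : IsOpen Θ ∨ ∀ T > (0 : ℝ), ∀ ω : Ω, θhat T ω ∈ Θ)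
    (r δ : ℝ) (hr : 0 < r) (hδ : 0 < δ)
    (hmeasU : ∀ T, Measurable (upperCB Θ I J r δ a T))
    (hmeasL : ∀ T, Measurable (lowerCB Θ I J r δ a T))
    (Hbar Hlow : ℝ → E → ℝ)
    (hHbarmeas : ∀ T, Measurable (Hbar T)) (hHlowmeas : ∀ T, Measurable (Hlow T))
    (hHbarequi : ∀ w0 : E, EvEquicontinuousAt Hbar w0)
    (hHlowequi : ∀ w0 : E, EvEquicontinuousAt Hlow w0)
    (haccurate : ∀ θ ∈ Θ,
      Filter.limsup
        (fun T => (((b T)⁻¹ : ℝ) : EReal) *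
          ENNReal.log (P θ {ω | ¬(Hlow T (θhat T ω) ≤ J θ ∧ J θ ≤ Hbar T (θhat T ω))}))
        atTop ≤ ((-r : ℝ) : EReal))
    (θ0 θt0 : E) (hθ0 : θ0 ∈ Θ) (hθt0 : θt0 ∈ Θ) (hJne : J θt0 ≠ J θ0)
    (hconsP : ∀ ε > (0 : ℝ),
      Tendsto (fun T => (P θ0 {ω | ε ≤ ‖θhat T ω - θ0‖}).toReal) atTop (nhds 0))
    (htight : ∀ ε > (0 : ℝ), ∃ K : Set E, IsCompact K ∧ ∃ T0 : ℝ,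
      ∀ T ≥ T0, (P θ0 {ω | θhat T ω ∉ K}).toReal ≤ ε) :
    Filter.limsup
        (fun T => (((P θ0 {ω | J θt0 ≤ upperCB Θ I J r δ a T (θhat T ω)}).toReal -
          (P θ0 {ω | J θt0 ≤ Hbar T (θhat T ω)}).toReal : ℝ) : EReal)) atTop ≤ 0 ∧
    Filter.limsup
        (fun T => (((P θ0 {ω | lowerCB Θ I J r δ a T (θhat T ω) ≤ J θt0}).toReal -
          (P θ0 {ω | Hlow T (θhat T ω) ≤ J θt0}).toReal : ℝ) : EReal)) atTop ≤ 0 := by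
  classical
  haveI := hP θ0
  have pmono : ∀ s t : Set Ω, s ⊆ t → ((P θ0) s).toReal ≤ ((P θ0) t).toReal := fun s t h =>
    ENNReal.toReal_mono (measure_ne_top _ t) (measure_mono h)
  have ple1 : ∀ s : Set Ω, ((P θ0) s).toReal ≤ 1 := by
    intro s
    have := pmono s univ (subset_univ s)
    simpa using this
  have pnn : ∀ s : Set Ω, 0 ≤ ((P θ0) s).toReal := fun s => ENNReal.toReal_nonneg
  have pcompl : ∀ p : Ω → Prop,
      1 - ((P θ0) {ω | ¬ p ω}).toReal ≤ ((P θ0) {ω | p ω}).toReal := by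
    intro p
    have h1 : (1 : ENNReal) ≤ (P θ0) {ω | p ω} + (P θ0) {ω | ¬ p ω} := by
      have h2 := measure_union_le (μ := P θ0) {ω | p ω} {ω | ¬ p ω}
      have h3 : {ω | p ω} ∪ {ω | ¬ p ω} = univ := by
        ext ω; by_cases h : p ω <;> simp [h]
      rw [h3, measure_univ] at h2
      exact h2
    have h4 : (1:ℝ) ≤ ((P θ0) {ω | p ω}).toReal + ((P θ0) {ω | ¬ p ω}).toReal := by
      have h5 := ENNReal.toReal_mono (a := 1)
        ((ENNReal.add_ne_top).2 ⟨measure_ne_top _ _, measure_ne_top _ _⟩) h1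
      rwa [ENNReal.toReal_one,
        ENNReal.toReal_add (measure_ne_top _ _) (measure_ne_top _ _)] at h5
    linarith
  -- coverage probability tends to 1
  set m : ℝ → ℝ := fun T =>
    ((P θ0) {ω | ¬(Hlow T (θhat T ω) ≤ J θ0 ∧ J θ0 ≤ Hbar T (θhat T ω))}).toReal with hmdef
  have hm0 : Tendsto m atTop (nhds 0) :=
    aux_cover (fun T => prob_le_one) hbpos hbtop hr (haccurate θ0 hθ0)
  -- uniform continuity setup
  set η : ℝ := |J θt0 - J θ0| / 2 with hηdef
  have hηpos : 0 < η := by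
    have h0 := abs_pos.2 (sub_ne_zero.2 hJne)
    simp only [hηdef]; linarith
  obtain ⟨ζ0, hζ0pos, hζ0⟩ := (Metric.uniformContinuousOn_iff.1 (hJ 1 one_pos θ0 hθ0)) η hηpos
  -- membership radius
  obtain ⟨ρ, hρpos, hρ⟩ : ∃ ρ > (0:ℝ), ∀ T > (0:ℝ), ∀ ω : Ω,
      ‖θhat T ω - θ0‖ < ρ → θhat T ω ∈ Θ := by
    rcases hdom with hopen | hval
    · obtain ⟨ρ, hρpos, hρ⟩ := Metric.isOpen_iff.1 hopen θ0 hθ0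
      exact ⟨ρ, hρpos, fun T _ ω h => hρ (by rwa [Metric.mem_ball, dist_eq_norm])⟩
    · exact ⟨1, one_pos, fun T hT ω _ => hval T hT ω⟩
  set ε1 : ℝ := min (min (1/2) ρ) (ζ0/3) with hε1def
  have hε1pos : 0 < ε1 := lt_min (lt_min (by norm_num) hρpos) (by linarith)
  have hε1half : ε1 ≤ 1/2 := le_trans (min_le_left _ _) (min_le_left _ _)
  have hε1ρ : ε1 ≤ ρ := le_trans (min_le_left _ _) (min_le_right _ _)
  have hε1ζ : ε1 ≤ ζ0/3 := min_le_right _ _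
  obtain ⟨T1, hT1⟩ := aux_det hδ hG1 hG2 hatop θ0 ε1 hε1pos
  set T2 : ℝ := max T1 1 with hT2def
  -- key deterministic claim on the good event
  have hkey : ∀ T ≥ T2, ∀ ω : Ω, ‖θhat T ω - θ0‖ < ε1 →
      upperCB Θ I J r δ a T (θhat T ω) ≤ J θ0 + η ∧
      J θ0 - η ≤ lowerCB Θ I J r δ a T (θhat T ω) := by
    intro T hT ω hω
    set x := θhat T ω with hxdef
    have hT1' : T ≥ T1 := le_trans (le_max_left _ _) hT
    have hTpos : (0:ℝ) < T := lt_of_lt_of_le one_pos (le_trans (le_max_right _ _) hT)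
    have hxΘ : x ∈ Θ := hρ T hTpos ω (lt_of_lt_of_le hω hε1ρ)
    have hx1 : ‖x - θ0‖ ≤ 1 := le_trans hω.le (by linarith)
    have hθ0mem : θ0 ∈ Metric.closedBall θ0 1 ∩ Θ := ⟨by simp, hθ0⟩
    have hxF : x ∈ {θ : E | θ ∈ Θ ∧ a T • (x - θ) ∈ fatSublevel I θ r δ} := by
      refine ⟨hxΘ, ?_⟩
      rw [mem_fatSublevel hδ.ne']
      exact ⟨0, by rw [hI0 x hxΘ]; exact zero_le, by simpa using hδ⟩
    have hJclose : ∀ θ ∈ {θ : E | θ ∈ Θ ∧ a T • (x - θ) ∈ fatSublevel I θ r δ},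
        |J θ - J θ0| < η := by
      intro θ hθF
      obtain ⟨hθΘ, hθfeas⟩ := hθF
      have hclose : ‖x - θ‖ ≤ ε1 := hT1 T hT1' x hx1 θ hθΘ hθfeas
      have hθθ0 : ‖θ - θ0‖ < ζ0 := by
        have ht := dist_triangle θ x θ0
        rw [dist_eq_norm, dist_eq_norm, dist_eq_norm] at ht
        have hrev : ‖θ - x‖ = ‖x - θ‖ := norm_sub_rev _ _
        rw [hrev] at ht
        linarith
      have hθmem : θ ∈ Metric.closedBall θ0 1 ∩ Θ := by
        refine ⟨?_, hθΘ⟩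
        rw [Metric.mem_closedBall, dist_eq_norm]
        have ht := dist_triangle θ x θ0
        rw [dist_eq_norm, dist_eq_norm, dist_eq_norm, norm_sub_rev θ x] at ht
        linarith
      have h6 := hζ0 θ hθmem θ0 hθ0mem (by rwa [dist_eq_norm])
      rwa [Real.dist_eq] at h6
    constructor
    · simp only [upperCB]
      refine csSup_le ⟨J x, mem_image_of_mem J hxF⟩ ?_
      rintro y ⟨θ, hθF, rfl⟩
      have h7 := abs_lt.1 (hJclose θ hθF)
      linarith [h7.2]
    · simp only [lowerCB]
      refine le_csInf ⟨J x, mem_image_of_mem J hxF⟩ ?_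
      rintro y ⟨θ, hθF, rfl⟩
      have h7 := abs_lt.1 (hJclose θ hθF)
      linarith [h7.1]
  rcases lt_or_gt_of_ne hJne with hlt | hgt
  · -- J θt0 < J θ0
    have hηeq : J θt0 < J θ0 - η := by
      rw [hηdef, abs_of_neg (by linarith : J θt0 - J θ0 < 0)]
      linarith
    constructor
    · -- uses coverage
      refine aux_limsup_le_zero (Filter.Eventually.of_forall fun T => ?_) hm0
      have hc : {ω | Hlow T (θhat T ω) ≤ J θ0 ∧ J θ0 ≤ Hbar T (θhat T ω)} ⊆
          {ω | J θt0 ≤ Hbar T (θhat T ω)} := fun ω hω => le_trans hlt.le hω.2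
      have h1 := pmono _ _ hc
      have h2 := pcompl (fun ω => Hlow T (θhat T ω) ≤ J θ0 ∧ J θ0 ≤ Hbar T (θhat T ω))
      have h3 := ple1 {ω | J θt0 ≤ upperCB Θ I J r δ a T (θhat T ω)}
      simp only [hmdef]
      linarith
    · -- uses the CB bound
      refine aux_limsup_le_zero ?_ (hconsP ε1 hε1pos)
      filter_upwards [eventually_ge_atTop T2] with T hT
      have hincl : {ω | lowerCB Θ I J r δ a T (θhat T ω) ≤ J θt0} ⊆
          {ω | ε1 ≤ ‖θhat T ω - θ0‖} := by
        intro ω hωe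
        by_contra hcon
        simp only [Set.mem_setOf_eq, not_le] at hcon
        have h8 := (hkey T hT ω hcon).2
        simp only [Set.mem_setOf_eq] at hωe
        linarith
      have h9 := pmono _ _ hincl
      linarith [pnn {ω | Hlow T (θhat T ω) ≤ J θt0}]
  · -- J θ0 < J θt0
    have hηeq : J θ0 + η < J θt0 := by
      rw [hηdef, abs_of_pos (by linarith : 0 < J θt0 - J θ0)]
      linarith
    constructor
    · -- uses the CB bound
      refine aux_limsup_le_zero ?_ (hconsP ε1 hε1pos)
      filter_upwards [eventually_ge_atTop T2] with T hT
      have hincl : {ω | J θt0 ≤ upperCB Θ I J r δ a T (θhat T ω)} ⊆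
          {ω | ε1 ≤ ‖θhat T ω - θ0‖} := by
        intro ω hωe
        by_contra hcon
        simp only [Set.mem_setOf_eq, not_le] at hcon
        have h8 := (hkey T hT ω hcon).1
        simp only [Set.mem_setOf_eq] at hωe
        linarith
      have h9 := pmono _ _ hincl
      linarith [pnn {ω | J θt0 ≤ Hbar T (θhat T ω)}]
    · -- uses coverage
      refine aux_limsup_le_zero (Filter.Eventually.of_forall fun T => ?_) hm0
      have hc : {ω | Hlow T (θhat T ω) ≤ J θ0 ∧ J θ0 ≤ Hbar T (θhat T ω)} ⊆
          {ω | Hlow T (θhat T ω) ≤ J θt0} := fun ω hω => le_trans hω.1 hgt.le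
      have h1 := pmono _ _ hc
      have h2 := pcompl (fun ω => Hlow T (θhat T ω) ≤ J θ0 ∧ J θ0 ≤ Hbar T (θhat T ω))
      have h3 := ple1 {ω | lowerCB Θ I J r δ a T (θhat T ω) ≤ J θt0}
      simp only [hmdef]
      linarith
end
end

section
/- Locally uniform minimality: Suppose the rate-function family satisfies the growth conditions (G1) and (G2), I_θ(0) = 0 for all θ ∈ Θ, J : Θ → ℝ is uniformly continuous on bounded subsets of Θ, and the LDP lower bound holds at every θ ∈ Θ. Fix r > 0 and δ > 0. Let (H̲_T)_{T>0} and (H̄_T)_{T>0} be eventually equicontinuous families of Borel measurable functions E → ℝ satisfying, for every θ ∈ Θ, limsup_{T→∞} (1/b_T) log P_θ(J(θ) ∉ [H̲_T(θ̂_T), H̄_T(θ̂_T)]) ≤ −r. Then for every compact set Θ0 ⊆ Θ, limsup_{T→∞} sup_{θ ∈ Θ0}(J̄^δ_{T,r}(θ) − H̄_T(θ)) ≤ 0 and limsup_{T→∞} sup_{θ ∈ Θ0}(H̲_T(θ) − J̲^δ_{T,r}(θ)) ≤ 0. -/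
set_option autoImplicit false

open Filter Topology Metric Set MeasureTheory

noncomputable section

variable {E : Type*} [NormedAddCommGroup E] [NormedSpace ℝ E]

variable {Ω : Type*} [MeasurableSpace Ω]

private lemma ereal_le_zero_of_forall {x : EReal} (h : ∀ ε : ℝ, 0 < ε → x ≤ (ε : EReal)) :
    x ≤ 0 := by
  by_contra hx
  push_neg at hx
  obtain ⟨c, hc0, hcx⟩ := EReal.exists_between_coe_real hx
  exact absurd (h c (by exact_mod_cast hc0)) (not_le.2 hcx)

/-- Pointwise bound: at a fixed `θ* ∈ Θ`, eventually `J θ* ≤ H T θ* + ε`. -/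
private lemma pointwise_bound
    {Θ : Set E} {I : E → E → ENNReal} {J : E → ℝ}
    {P : E → Measure Ω} {θhat : ℝ → Ω → E} {b a : ℝ → ℝ}
    (hbpos : ∀ T, 0 < b T)
    (ha0 : ∀ T, 0 ≤ a T) (hatop : Tendsto a atTop atTop)
    (hI0 : ∀ θ ∈ Θ, I θ 0 = 0)
    (H : ℝ → E → ℝ) (hHequi : ∀ w0 : E, EvEquicontinuousAt H w0)
    {r : ℝ} (hr : 0 < r)
    (θs : E) (hθs : θs ∈ Θ)
    (hLDP : LDPLowerAt (P θs) θhat a b (I θs) θs)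
    (hacc : Filter.limsup (fun T => (((b T)⁻¹ : ℝ) : EReal) *
        ENNReal.log (P θs {ω | H T (θhat T ω) < J θs})) atTop ≤ ((-r : ℝ) : EReal))
    (ε : ℝ) (hε : 0 < ε) :
    ∀ᶠ T in atTop, J θs ≤ H T θs + ε := by
  obtain ⟨ρ, hρ, T0, hT00, hmod⟩ := hHequi θs ε hε
  -- LDP lower bound on the unit ball
  have hinf : (⨅ ϑ ∈ Metric.ball (0 : E) 1, I θs ϑ) = 0 := by
    refine le_antisymm ?_ zero_le
    calc (⨅ ϑ ∈ Metric.ball (0 : E) 1, I θs ϑ) ≤ I θs 0 :=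
          iInf₂_le 0 (mem_ball_self one_pos)
      _ = 0 := hI0 θs hθs
  have hlim := hLDP (Metric.ball (0 : E) 1) isOpen_ball
  rw [hinf] at hlim
  simp only [EReal.coe_ennreal_zero, neg_zero] at hlim
  have hev1 : ∀ᶠ T in atTop, ((-(r/2) : ℝ) : EReal) <
      (((b T)⁻¹ : ℝ) : EReal) *
        ENNReal.log (P θs {ω | a T • (θhat T ω - θs) ∈ Metric.ball (0 : E) 1}) := by
    refine Filter.eventually_lt_of_lt_liminf (lt_of_lt_of_le ?_ hlim)
    exact_mod_cast (by linarith : -(r/2) < (0 : ℝ))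
  have hev2 : ∀ᶠ T in atTop, (((b T)⁻¹ : ℝ) : EReal) *
      ENNReal.log (P θs {ω | H T (θhat T ω) < J θs}) < ((-(r/2) : ℝ) : EReal) := by
    refine Filter.eventually_lt_of_limsup_lt (lt_of_le_of_lt hacc ?_)
    exact_mod_cast (by linarith : -r < -(r/2))
  have hev3 : ∀ᶠ T in atTop, 1 ≤ a T * ρ := by
    filter_upwards [hatop.eventually_ge_atTop ρ⁻¹] with T hT
    rw [← inv_mul_cancel₀ hρ.ne']
    exact mul_le_mul_of_nonneg_right hT hρ.le
  filter_upwards [hev1, hev2, hev3, eventually_ge_atTop T0] with T h1 h2 h3 h4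
  have hPlt : P θs {ω | H T (θhat T ω) < J θs} <
      P θs {ω | a T • (θhat T ω - θs) ∈ Metric.ball (0 : E) 1} := by
    by_contra hle
    push_neg at hle
    have := mul_le_mul_of_nonneg_left (ENNReal.log_monotone hle)
      (by exact_mod_cast (inv_nonneg.2 (hbpos T).le) : (0 : EReal) ≤ (((b T)⁻¹ : ℝ) : EReal))
    exact absurd (h2.trans h1) (not_lt.2 this)
  have hnsub : ¬ ({ω | a T • (θhat T ω - θs) ∈ Metric.ball (0 : E) 1} ⊆
      {ω | H T (θhat T ω) < J θs}) := fun hsub => absurd (measure_mono hsub) (not_le.2 hPlt)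
  obtain ⟨ω, hωG, hωB⟩ := not_subset.mp hnsub
  have hG : a T * ‖θhat T ω - θs‖ < 1 := by
    have := mem_ball_zero_iff.1 hωG
    rwa [norm_smul, Real.norm_of_nonneg (ha0 T)] at this
  have hapos : 0 < a T := by nlinarith
  have hdist : θhat T ω ∈ Metric.closedBall θs ρ := by
    rw [mem_closedBall, dist_eq_norm]
    nlinarith
  have hmod' := hmod T h4 (θhat T ω) hdist
  have hJle : J θs ≤ H T (θhat T ω) := not_lt.1 hωB
  have := abs_lt.1 hmod'
  linarith [this.1, this.2]

/-- Uniform localization from G1 and G2. -/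
private lemma localization
    {Θ : Set E} {I : E → E → ENNReal} {a : ℝ → ℝ}
    (ha0 : ∀ T, 0 ≤ a T) (hatop : Tendsto a atTop atTop)
    (hG1 : GrowthG1 Θ I) (hG2 : GrowthG2 Θ I)
    {r δ : ℝ} (hδ : 0 < δ)
    (Θ0 : Set E) (hΘ0cpt : IsCompact Θ0) :
    ∃ C : ℝ, ∀ᶠ T in atTop, ∀ θ0 ∈ Θ0, ∀ θ ∈ Θ,
      a T • (θ0 - θ) ∈ fatSublevel I θ r δ → a T * ‖θ0 - θ‖ ≤ C := by
  obtain ⟨K0, hK0⟩ := isBounded_iff_forall_norm_le.mp hΘ0cpt.isBounded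
  set K : ℝ := |K0| + 1 with hKdef
  have hK1 : 1 ≤ K := by have := abs_nonneg K0; linarith
  have hKb : ∀ x ∈ Θ0, ‖x‖ ≤ K := fun x hx => (hK0 x hx).trans (by
    have := le_abs_self K0; linarith)
  by_contra hcon
  push_neg at hcon
  have hseq : ∀ n : ℕ, ∃ T ≥ (n : ℝ), ∃ θ0 ∈ Θ0, ∃ θ ∈ Θ,
      a T • (θ0 - θ) ∈ fatSublevel I θ r δ ∧ (n : ℝ) < a T * ‖θ0 - θ‖ := by
    intro n
    have := hcon n
    obtain ⟨T, hT, hP⟩ := Filter.frequently_atTop.1 this (n : ℝ)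
    obtain ⟨θ0, hθ0, θ, hθ, hmem, hgt⟩ := hP
    exact ⟨T, hT, θ0, hθ0, θ, hθ, hmem, hgt⟩
  choose T hTge θ0 hθ0 θ hθ hmem hgt using hseq
  have hmem' : ∀ n, ∃ ϑ, I (θ n) ϑ ≤ ENNReal.ofReal r ∧
      dist (a (T n) • (θ0 n - θ n)) ϑ < δ := by
    intro n
    have := hmem n
    rw [fatSublevel, if_neg hδ.ne'] at this
    simpa [sublevelSet, mem_ball'] using this
  choose ϑ hϑr hϑd using hmem'
  have hb : ∀ n, a (T n) * ‖θ0 n - θ n‖ - δ ≤ ‖ϑ n‖ := by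
    intro n
    have h1 : ‖a (T n) • (θ0 n - θ n)‖ - ‖ϑ n‖ ≤ ‖a (T n) • (θ0 n - θ n) - ϑ n‖ :=
      norm_sub_norm_le _ _
    have h2 := hϑd n
    rw [dist_eq_norm] at h2
    rw [norm_smul, Real.norm_of_nonneg (ha0 _)] at h1
    linarith
  have hϑtop : Tendsto (fun n => ‖ϑ n‖) atTop atTop := by
    refine tendsto_atTop_mono (fun n => ?_)
      (tendsto_atTop_add_const_right atTop (-δ) tendsto_natCast_atTop_atTop)
    have := hb n
    have := (hgt n).le
    linarith
  have hTtop : Tendsto T atTop atTop := tendsto_atTop_mono hTge tendsto_natCast_atTop_atTop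
  have haTtop : Tendsto (fun n => a (T n)) atTop atTop := hatop.comp hTtop
  by_cases hθtop : Tendsto (fun n => ‖θ n‖) atTop atTop
  · -- G2 case
    have hratio : Tendsto (fun n => ‖ϑ n‖ / ‖θ n‖) atTop atTop := by
      refine tendsto_atTop_mono' atTop ?_
        (tendsto_atTop_add_const_right atTop (-δ) (haTtop.atTop_div_const two_pos))
      filter_upwards [hθtop.eventually_ge_atTop (2 * K)] with n hn
      have hθpos : (0 : ℝ) < ‖θ n‖ := by linarith
      rw [le_div_iff₀ hθpos]
      have hd : ‖θ n‖ - K ≤ ‖θ0 n - θ n‖ := by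
        have h1 : ‖θ n‖ - ‖θ0 n‖ ≤ ‖θ n - θ0 n‖ := norm_sub_norm_le _ _
        rw [norm_sub_rev] at h1
        have := hKb _ (hθ0 n)
        linarith
      have hmul : a (T n) * (‖θ n‖ - K) ≤ a (T n) * ‖θ0 n - θ n‖ :=
        mul_le_mul_of_nonneg_left hd (ha0 _)
      have hbn := hb n
      nlinarith [ha0 (T n)]
    have htop := hG2 θ ϑ hθ hθtop hratio
    have hle : Filter.limsup (fun n => I (θ n) (ϑ n)) atTop ≤ ENNReal.ofReal r :=
      Filter.limsup_le_of_le (h := Filter.Eventually.of_forall hϑr)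
    rw [htop] at hle
    exact absurd hle (by simp [ENNReal.ofReal_lt_top.ne])
  · -- G1 case
    rw [Filter.tendsto_atTop] at hθtop
    push_neg at hθtop
    obtain ⟨M, hM⟩ := hθtop
    obtain ⟨φ, hφmono, hφ⟩ := Filter.extraction_of_frequently_atTop (by
      simpa using hM)
    have hG1res := hG1 (θ ∘ φ) (ϑ ∘ φ) (fun n => hθ _)
      ⟨M, fun n => (hφ n).le⟩ (hϑtop.comp hφmono.tendsto_atTop)
    have hev : ∀ᶠ n in atTop, I (θ (φ n)) (ϑ (φ n)) ∈ Ioi (ENNReal.ofReal r) :=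
      hG1res.eventually_mem (isOpen_Ioi.mem_nhds ENNReal.ofReal_lt_top)
    obtain ⟨n, hn⟩ := hev.exists
    exact absurd (hϑr (φ n)) (not_le.2 hn)

/-- Key uniform bound over a compact set. -/
private lemma key_upper
    {Θ : Set E} {I : E → E → ENNReal} {J : E → ℝ}
    {P : E → Measure Ω} {θhat : ℝ → Ω → E} {b a : ℝ → ℝ}
    (hbpos : ∀ T, 0 < b T)
    (ha0 : ∀ T, 0 ≤ a T) (hatop : Tendsto a atTop atTop)
    (hG1 : GrowthG1 Θ I) (hG2 : GrowthG2 Θ I)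
    (hI0 : ∀ θ ∈ Θ, I θ 0 = 0)
    (hJc : ∀ θ ∈ Θ, ContinuousWithinAt J Θ θ)
    (hLDPlow : ∀ θ ∈ Θ, LDPLowerAt (P θ) θhat a b (I θ) θ)
    {r δ : ℝ} (hr : 0 < r) (hδ : 0 < δ)
    (H : ℝ → E → ℝ) (hHequi : ∀ w0 : E, EvEquicontinuousAt H w0)
    (hacc : ∀ θ ∈ Θ, Filter.limsup (fun T => (((b T)⁻¹ : ℝ) : EReal) *
        ENNReal.log (P θ {ω | H T (θhat T ω) < J θ})) atTop ≤ ((-r : ℝ) : EReal))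
    (Θ0 : Set E) (hΘ0sub : Θ0 ⊆ Θ) (hΘ0cpt : IsCompact Θ0)
    (ε : ℝ) (hε : 0 < ε) :
    ∀ᶠ T in atTop, ∀ θ0 ∈ Θ0, ∀ θ ∈ Θ,
      a T • (θ0 - θ) ∈ fatSublevel I θ r δ → J θ ≤ H T θ0 + ε := by
  obtain ⟨C, hC⟩ := localization ha0 hatop hG1 hG2 hδ Θ0 hΘ0cpt (r := r)
  by_contra hcon
  rw [Filter.not_eventually] at hcon
  have hseq : ∀ n : ℕ, ∃ T ≥ (n : ℝ),
      (∃ θ0 ∈ Θ0, ∃ θ ∈ Θ, a T • (θ0 - θ) ∈ fatSublevel I θ r δ ∧ H T θ0 + ε < J θ) ∧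
      (∀ θ0 ∈ Θ0, ∀ θ ∈ Θ, a T • (θ0 - θ) ∈ fatSublevel I θ r δ → a T * ‖θ0 - θ‖ ≤ C) := by
    intro n
    obtain ⟨T, hT, h1, h2⟩ := Filter.frequently_atTop.1 (hcon.and_eventually hC) (n : ℝ)
    push_neg at h1
    obtain ⟨θ0, hθ0, θ, hθ, hmem, hgt⟩ := h1
    exact ⟨T, hT, ⟨θ0, hθ0, θ, hθ, hmem, hgt⟩, h2⟩
  choose T hTge hbad hCbd using hseq
  choose θ0 hθ0 θ hθ hmem hgt using hbad
  have hd : ∀ n, a (T n) * ‖θ0 n - θ n‖ ≤ C :=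
    fun n => hCbd n _ (hθ0 n) _ (hθ n) (hmem n)
  have hTtop : Tendsto T atTop atTop := tendsto_atTop_mono hTge tendsto_natCast_atTop_atTop
  have haTtop : Tendsto (fun n => a (T n)) atTop atTop := hatop.comp hTtop
  have hdist : Tendsto (fun n => ‖θ0 n - θ n‖) atTop (𝓝 0) := by
    refine squeeze_zero' (g := fun n => C / a (T n))
      (Filter.Eventually.of_forall (fun n => norm_nonneg _)) ?_
      (Filter.Tendsto.div_atTop (tendsto_const_nhds (x := C)) haTtop)
    filter_upwards [haTtop.eventually_gt_atTop 0] with n hn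
    rw [le_div_iff₀ hn]
    calc ‖θ0 n - θ n‖ * a (T n) = a (T n) * ‖θ0 n - θ n‖ := mul_comm _ _
      _ ≤ C := hd n
  obtain ⟨θs, hθsΘ0, φ, hφmono, hφtend⟩ := hΘ0cpt.tendsto_subseq hθ0
  have hsub0 : Tendsto (fun n => θ0 (φ n) - θ (φ n)) atTop (𝓝 0) := by
    rw [tendsto_zero_iff_norm_tendsto_zero]
    exact hdist.comp hφmono.tendsto_atTop
  have hθtend : Tendsto (fun n => θ (φ n)) atTop (𝓝 θs) := by
    have := hφtend.sub hsub0
    simpa using this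
  have hθsΘ : θs ∈ Θ := hΘ0sub hθsΘ0
  have hJtend : Tendsto (fun n => J (θ (φ n))) atTop (𝓝 (J θs)) := by
    refine (hJc θs hθsΘ).tendsto.comp ?_
    rw [tendsto_nhdsWithin_iff]
    exact ⟨hθtend, Filter.Eventually.of_forall (fun n => hθ _)⟩
  obtain ⟨ρ2, hρ2, T0, hT00, hmod⟩ := hHequi θs (ε/4) (by linarith)
  have hpt := pointwise_bound hbpos ha0 hatop hI0 H hHequi hr θs hθsΘ
    (hLDPlow θs hθsΘ) (hacc θs hθsΘ) (ε/4) (by linarith)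
  obtain ⟨T1, hT1⟩ := Filter.eventually_atTop.1 hpt
  have hA : ∀ᶠ n in atTop, J (θ (φ n)) < J θs + ε/4 :=
    hJtend.eventually_lt_const (by linarith)
  have hB : ∀ᶠ n in atTop, θ0 (φ n) ∈ Metric.closedBall θs ρ2 :=
    hφtend.eventually_mem (Metric.closedBall_mem_nhds _ hρ2)
  have hCn : ∀ᶠ n in atTop, max T0 T1 ≤ T (φ n) :=
    (hTtop.comp hφmono.tendsto_atTop).eventually_ge_atTop _
  obtain ⟨n, hAn, hBn, hCn'⟩ := (hA.and (hB.and hCn)).exists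
  have h1 := hmod (T (φ n)) ((le_max_left _ _).trans hCn') (θ0 (φ n)) hBn
  have h2 := hT1 (T (φ n)) ((le_max_right _ _).trans hCn')
  have h3 := hgt (φ n)
  have h4 := abs_lt.1 h1
  linarith [h4.1, h4.2]

/-- locally uniform minimality: against any exponentially accurate
eventually equicontinuous interval family `(H̲_T, H̄_T)`, for every compact `Θ0 ⊆ Θ`,
`limsup sup_{θ∈Θ0}(J̄^δ_{T,r}(θ) − H̄_T(θ)) ≤ 0` and
`limsup sup_{θ∈Θ0}(H̲_T(θ) − J̲^δ_{T,r}(θ)) ≤ 0`. -/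
theorem stmt16 (Θ : Set E) (hΘ : Θ.Nonempty) (I : E → E → ENNReal) (J : E → ℝ)
    [MeasurableSpace E] [BorelSpace E]
    (P : E → Measure Ω) (hP : ∀ θ, IsProbabilityMeasure (P θ))
    (θhat : ℝ → Ω → E) (hθhatmeas : ∀ T, Measurable (θhat T))
    (b a : ℝ → ℝ) (hbpos : ∀ T, 0 < b T) (hbtop : Tendsto b atTop atTop)
    (hadef : ∀ T, a T = Real.sqrt (T / b T)) (hatop : Tendsto a atTop atTop)
    (hG1 : GrowthG1 Θ I) (hG2 : GrowthG2 Θ I)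
    (hI0 : ∀ θ ∈ Θ, I θ 0 = 0)
    (hJ : ∀ a0 > (0 : ℝ), ∀ θ0 ∈ Θ, UniformContinuousOn J (Metric.closedBall θ0 a0 ∩ Θ))
    (hLDPlow : ∀ θ ∈ Θ, LDPLowerAt (P θ) θhat a b (I θ) θ)
    (r δ : ℝ) (hr : 0 < r) (hδ : 0 < δ)
    (Hbar Hlow : ℝ → E → ℝ)
    (hHbarmeas : ∀ T, Measurable (Hbar T)) (hHlowmeas : ∀ T, Measurable (Hlow T))
    (hHbarequi : ∀ w0 : E, EvEquicontinuousAt Hbar w0)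
    (hHlowequi : ∀ w0 : E, EvEquicontinuousAt Hlow w0)
    (haccurate : ∀ θ ∈ Θ,
      Filter.limsup
        (fun T => (((b T)⁻¹ : ℝ) : EReal) *
          ENNReal.log (P θ {ω | ¬(Hlow T (θhat T ω) ≤ J θ ∧ J θ ≤ Hbar T (θhat T ω))}))
        atTop ≤ ((-r : ℝ) : EReal)) :
    ∀ Θ0 : Set E, Θ0 ⊆ Θ → IsCompact Θ0 →
      Filter.limsup
          (fun T => ⨆ θ ∈ Θ0, ((upperCB Θ I J r δ a T θ - Hbar T θ : ℝ) : EReal))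
          atTop ≤ 0 ∧
      Filter.limsup
          (fun T => ⨆ θ ∈ Θ0, ((Hlow T θ - lowerCB Θ I J r δ a T θ : ℝ) : EReal))
          atTop ≤ 0 := by
  intro Θ0 hsub hcpt
  have ha0 : ∀ T, 0 ≤ a T := fun T => (hadef T) ▸ Real.sqrt_nonneg _
  -- continuity of J within Θ
  have hJc : ∀ θ ∈ Θ, ContinuousWithinAt J Θ θ := by
    intro θ hθ
    have h1 : ContinuousWithinAt J (Metric.closedBall θ 1 ∩ Θ) θ :=
      (hJ 1 one_pos θ hθ).continuousOn θ ⟨Metric.mem_closedBall_self zero_le_one, hθ⟩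
    exact h1.mono_of_mem_nhdsWithin <| Filter.inter_mem
      (mem_nhdsWithin_of_mem_nhds (Metric.closedBall_mem_nhds _ one_pos)) self_mem_nhdsWithin
  -- accuracy for the upper bound
  have haccA : ∀ θ ∈ Θ, Filter.limsup (fun T => (((b T)⁻¹ : ℝ) : EReal) *
      ENNReal.log (P θ {ω | Hbar T (θhat T ω) < J θ})) atTop ≤ ((-r : ℝ) : EReal) := by
    intro θ hθ
    refine le_trans (Filter.limsup_le_limsup (Filter.Eventually.of_forall fun T => ?_))
      (haccurate θ hθ)
    refine mul_le_mul_of_nonneg_left (ENNReal.log_monotone (measure_mono ?_))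
      (by exact_mod_cast inv_nonneg.2 (hbpos T).le : (0 : EReal) ≤ (((b T)⁻¹ : ℝ) : EReal))
    intro ω hω
    simp only [mem_setOf_eq] at hω ⊢
    exact fun h => absurd h.2 (not_le.2 hω)
  -- accuracy for the lower bound (negated data)
  have haccB : ∀ θ ∈ Θ, Filter.limsup (fun T => (((b T)⁻¹ : ℝ) : EReal) *
      ENNReal.log (P θ {ω | (fun T w => -Hlow T w) T (θhat T ω) < (fun ϑ => -J ϑ) θ}))
      atTop ≤ ((-r : ℝ) : EReal) := by
    intro θ hθ
    refine le_trans (Filter.limsup_le_limsup (Filter.Eventually.of_forall fun T => ?_))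
      (haccurate θ hθ)
    refine mul_le_mul_of_nonneg_left (ENNReal.log_monotone (measure_mono ?_))
      (by exact_mod_cast inv_nonneg.2 (hbpos T).le : (0 : EReal) ≤ (((b T)⁻¹ : ℝ) : EReal))
    intro ω hω
    simp only [mem_setOf_eq] at hω ⊢
    exact fun h => absurd h.1 (not_le.2 (by linarith))
  have hHlowequi' : ∀ w0 : E, EvEquicontinuousAt (fun T w => -Hlow T w) w0 := by
    intro w0 ε hε
    obtain ⟨d, hd, T0, hT0, hm⟩ := hHlowequi w0 ε hε
    refine ⟨d, hd, T0, hT0, fun T hT w hw => ?_⟩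
    have h := hm T hT w hw
    rw [abs_sub_comm] at h
    simpa [sub_eq_add_neg, add_comm] using h
  -- θ0 itself always satisfies the constraint
  have hself : ∀ T : ℝ, ∀ θ0 ∈ Θ0,
      θ0 ∈ {θ : E | θ ∈ Θ ∧ a T • (θ0 - θ) ∈ fatSublevel I θ r δ} := by
    intro T θ0 hθ0
    refine ⟨hsub hθ0, ?_⟩
    rw [sub_self, smul_zero, fatSublevel, if_neg hδ.ne']
    exact mem_biUnion (show (0 : E) ∈ sublevelSet I θ0 r by
      simp [sublevelSet, hI0 θ0 (hsub hθ0)]) (mem_ball_self hδ)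
  constructor
  · refine ereal_le_zero_of_forall fun ε hε => ?_
    refine Filter.limsup_le_of_le (h := ?_)
    filter_upwards [key_upper hbpos ha0 hatop hG1 hG2 hI0 hJc hLDPlow hr hδ Hbar hHbarequi
      haccA Θ0 hsub hcpt ε hε] with T hT
    refine iSup₂_le fun θ0 hθ0 => ?_
    rw [EReal.coe_le_coe_iff]
    have hup : upperCB Θ I J r δ a T θ0 ≤ Hbar T θ0 + ε := by
      refine csSup_le ⟨J θ0, mem_image_of_mem J (hself T θ0 hθ0)⟩ ?_
      rintro x ⟨θ, ⟨hθΘ, hmemθ⟩, rfl⟩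
      exact hT θ0 hθ0 θ hθΘ hmemθ
    linarith
  · refine ereal_le_zero_of_forall fun ε hε => ?_
    refine Filter.limsup_le_of_le (h := ?_)
    filter_upwards [key_upper hbpos ha0 hatop hG1 hG2 hI0
      (fun θ hθ => (hJc θ hθ).neg) hLDPlow hr hδ (fun T w => -Hlow T w) hHlowequi'
      haccB Θ0 hsub hcpt ε hε] with T hT
    refine iSup₂_le fun θ0 hθ0 => ?_
    rw [EReal.coe_le_coe_iff]
    have hlo : Hlow T θ0 - ε ≤ lowerCB Θ I J r δ a T θ0 := by
      refine le_csInf ⟨J θ0, mem_image_of_mem J (hself T θ0 hθ0)⟩ ?_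
      rintro x ⟨θ, ⟨hθΘ, hmemθ⟩, rfl⟩
      have := hT θ0 hθ0 θ hθΘ hmemθ
      simp only [Pi.neg_apply] at this
      linarith
    linarith
end
end
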